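/- arXiv:1002.1998 — 3 statements merged into one kernel-verified Lean document; each statement's English description precedes it below -/
import Mathlib

section
/- There exists a constant c_0 > 0 such that the set of positive integers N satisfying φ(N)/N > c_0 / log(log(log N)) has natural density one; equivalently, the set of N ≥ 16 with φ(N)/N ≤ c_0 / log(log(log N)) satisfies #{n ≤ x : n in the set}/x → 0 as x → ∞. -/
open scoped Classical

open Finset

noncomputable def sumRecip (n : ℕ) : ℝ := ∑ p ∈ n.primeFactors, (1 : ℝ) / p

lemma sumRecip_nonneg (n : ℕ) : 0 ≤ sumRecip n :=
  Finset.sum_nonneg fun p _ => by positivity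

lemma totient_ratio_prod (n : ℕ) (hn : n ≠ 0) :
    (Nat.totient n : ℝ) / n = ∏ p ∈ n.primeFactors, (1 - (p : ℝ)⁻¹) := by
  have h := Nat.totient_eq_mul_prod_factors n
  have h' : (Nat.totient n : ℝ) = n * ∏ p ∈ n.primeFactors, (1 - (p : ℝ)⁻¹) := by
    have h2 := congrArg (fun q : ℚ => (q : ℝ)) h
    push_cast at h2
    exact h2
  have hn' : (n : ℝ) ≠ 0 := Nat.cast_ne_zero.mpr hn
  rw [h', mul_comm, mul_div_assoc, div_self hn', mul_one]

lemma exp_le_one_sub {p : ℕ} (hp : p.Prime) :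
    Real.exp (-(2 * ((1:ℝ) / p))) ≤ 1 - (p : ℝ)⁻¹ := by
  have h2 : (2 : ℝ) ≤ (p : ℝ) := by exact_mod_cast hp.two_le
  have hp0 : (0 : ℝ) < p := by linarith
  have hexp := Real.add_one_le_exp (2 * ((1:ℝ)/p))
  have hinv : (p:ℝ)⁻¹ = 1/p := by rw [one_div]
  have hlt : (1:ℝ)/p ≤ 1/2 := by
    apply div_le_div_of_nonneg_left (by norm_num) (by norm_num) h2
  have hppos : (0:ℝ) < 1/p := by positivity
  have hsub : (0:ℝ) < 1 - 1/p := by nlinarith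
  rw [Real.exp_neg, hinv, inv_le_comm₀ (Real.exp_pos _) hsub]
  calc (1 - (1:ℝ)/p)⁻¹ ≤ 2 * ((1:ℝ)/p) + 1 := by
        rw [inv_le_iff_one_le_mul₀ hsub]
        nlinarith
      _ ≤ Real.exp (2 * ((1:ℝ)/p)) := by linarith

lemma exp_le_ratio (n : ℕ) (hn : n ≠ 0) :
    Real.exp (-2 * sumRecip n) ≤ (Nat.totient n : ℝ) / n := by
  rw [totient_ratio_prod n hn]
  have key : Real.exp (-2 * sumRecip n)
      = ∏ p ∈ n.primeFactors, Real.exp (-(2 * ((1:ℝ)/p))) := by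
    rw [← Real.exp_sum]
    congr 1
    rw [sumRecip, neg_mul, Finset.mul_sum, ← Finset.sum_neg_distrib]
  rw [key]
  apply Finset.prod_le_prod (fun p _ => (Real.exp_pos _).le)
  intro p hp
  exact exp_le_one_sub (Nat.prime_of_mem_primeFactors hp)

lemma card_multiples_le (x d : ℕ) (hd : 1 ≤ d) :
    ((Finset.range (x+1)).filter (fun n => d ∣ n)).card ≤ x / d + 1 := by
  have : ((Finset.range (x+1)).filter (fun n => d ∣ n)).card
      ≤ (Finset.range (x / d + 1)).card := by
    apply Finset.card_le_card_of_injOn (fun n => n / d)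
    · intro n hn
      simp only [Finset.coe_filter, Set.mem_setOf_eq, Finset.mem_coe, Finset.mem_filter, Finset.mem_range] at hn ⊢
      obtain ⟨hnx, hdn⟩ := hn
      have := Nat.div_le_div_right (c := d) (Nat.lt_succ_iff.mp hnx)
      omega
    · intro a ha b hb hab
      simp only [Finset.mem_coe, Finset.mem_filter] at ha hb
      simp only at hab
      obtain ⟨c, rfl⟩ := ha.2
      obtain ⟨c', rfl⟩ := hb.2
      rw [Nat.mul_div_cancel_left _ hd, Nat.mul_div_cancel_left _ hd] at hab
      rw [hab]
  simpa using this

lemma sum_inv_sq_le' (x : ℕ) (hx : 1 ≤ x) :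
    ∑ d ∈ Finset.Icc 2 x, (1:ℝ) / (d:ℝ)^2 ≤ 1 - 1 / x := by
  induction x, hx using Nat.le_induction with
  | base => simp
  | succ n hn ih =>
    rw [← Finset.insert_Icc_right_eq_Icc_add_one (by omega), Finset.sum_insert (by simp)]
    have h1 : (1:ℝ) ≤ (n:ℝ) := by exact_mod_cast hn
    have h2 : (0:ℝ) < (n:ℝ) := by linarith
    have h3 : (0:ℝ) < ((n:ℝ)+1) := by linarith
    have hcast : ((n+1 : ℕ) : ℝ) = (n:ℝ) + 1 := by push_cast; ring
    rw [hcast]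
    have key : (1:ℝ) / ((n:ℝ)+1)^2 ≤ 1/(n:ℝ) - 1/((n:ℝ)+1) := by
      rw [div_sub_div _ _ (ne_of_gt h2) (ne_of_gt h3)]
      rw [div_le_div_iff₀ (by positivity) (by positivity)]
      ring_nf
      nlinarith
    linarith

lemma sum_inv_sq_le (x : ℕ) : ∑ d ∈ Finset.Icc 2 x, (1:ℝ) / (d:ℝ)^2 ≤ 1 := by
  rcases Nat.lt_or_ge x 1 with h | h
  · interval_cases x <;> simp
  · have := sum_inv_sq_le' x h
    have : (0:ℝ) ≤ 1/(x:ℝ) := by positivity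
    linarith [sum_inv_sq_le' x h]

lemma sumRecip_le_indicator (x n : ℕ) (hn : n ∈ Finset.range (x+1)) :
    sumRecip n ≤ ∑ d ∈ Finset.Icc 2 x, (if d ∣ n then (1:ℝ)/d else 0) := by
  have hsub : n.primeFactors ⊆ Finset.Icc 2 x := by
    intro p hp
    have hprime := Nat.prime_of_mem_primeFactors hp
    have hdvd := Nat.dvd_of_mem_primeFactors hp
    have hne := Nat.pos_of_mem_primeFactors hp
    have : p ≤ n := Nat.le_of_dvd (by
      rcases Nat.eq_zero_or_pos n with rfl | h
      · simp at hp
      · exact h) hdvd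
    simp only [Finset.mem_range] at hn
    exact Finset.mem_Icc.mpr ⟨hprime.two_le, by omega⟩
  calc sumRecip n = ∑ d ∈ Finset.Icc 2 x, (if d ∈ n.primeFactors then (1:ℝ)/d else 0) := by
        rw [Finset.sum_ite_mem, Finset.inter_comm, Finset.inter_eq_left.mpr hsub, sumRecip]
    _ ≤ ∑ d ∈ Finset.Icc 2 x, (if d ∣ n then (1:ℝ)/d else 0) := by
        apply Finset.sum_le_sum
        intro d hd
        by_cases h : d ∈ n.primeFactors
        · rw [if_pos h, if_pos (Nat.dvd_of_mem_primeFactors h)]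
        · rw [if_neg h]
          by_cases h2 : d ∣ n
          · rw [if_pos h2]; positivity
          · rw [if_neg h2]

lemma sumRecip_avg (x : ℕ) :
    ∑ n ∈ Finset.range (x+1), sumRecip n ≤ 2 * x := by
  calc ∑ n ∈ Finset.range (x+1), sumRecip n
      ≤ ∑ n ∈ Finset.range (x+1), ∑ d ∈ Finset.Icc 2 x, (if d ∣ n then (1:ℝ)/d else 0) :=
        Finset.sum_le_sum (fun n hn => sumRecip_le_indicator x n hn)
    _ = ∑ d ∈ Finset.Icc 2 x, ∑ n ∈ Finset.range (x+1), (if d ∣ n then (1:ℝ)/d else 0) :=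
        Finset.sum_comm
    _ ≤ ∑ d ∈ Finset.Icc 2 x, 2 * (x:ℝ) / (d:ℝ)^2 := by
        apply Finset.sum_le_sum
        intro d hd
        rw [← Finset.sum_filter, Finset.sum_const, nsmul_eq_mul]
        obtain ⟨hd2, hdx⟩ := Finset.mem_Icc.mp hd
        have hd1 : 1 ≤ d := by omega
        have hcard := card_multiples_le x d hd1
        have hdr : (0:ℝ) < (d:ℝ) := by exact_mod_cast Nat.lt_of_lt_of_le (by norm_num) hd2
        have hxd1 : 1 ≤ x / d := (Nat.one_le_div_iff hd1).mpr hdx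
        have hcard2 : (((Finset.range (x+1)).filter (fun n => d ∣ n)).card : ℝ)
            ≤ 2 * ((x/d : ℕ) : ℝ) := by
          have : ((Finset.range (x+1)).filter (fun n => d ∣ n)).card ≤ 2 * (x/d) := by omega
          exact_mod_cast this
        have hdivle : ((x/d : ℕ) : ℝ) ≤ (x:ℝ)/(d:ℝ) := Nat.cast_div_le
        calc (((Finset.range (x+1)).filter (fun n => d ∣ n)).card : ℝ) * (1/d)
            ≤ (2 * ((x:ℝ)/(d:ℝ))) * (1/d) := by
              apply mul_le_mul_of_nonneg_right _ (by positivity)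
              calc (((Finset.range (x+1)).filter (fun n => d ∣ n)).card : ℝ)
                  ≤ 2 * ((x/d : ℕ) : ℝ) := hcard2
                _ ≤ 2 * ((x:ℝ)/(d:ℝ)) := by linarith
          _ = 2 * (x:ℝ) / (d:ℝ)^2 := by rw [pow_two]; field_simp
    _ = 2 * (x:ℝ) * ∑ d ∈ Finset.Icc 2 x, 1/(d:ℝ)^2 := by
        rw [Finset.mul_sum]
        apply Finset.sum_congr rfl
        intro d hd
        field_simp
    _ ≤ 2 * (x:ℝ) * 1 := by
        apply mul_le_mul_of_nonneg_left (sum_inv_sq_le x) (by positivity)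
    _ = 2 * x := by ring

lemma markov (x : ℕ) (T : ℝ) (hT : 0 < T) :
    (((Finset.range (x+1)).filter (fun n => T ≤ sumRecip n)).card : ℝ) ≤ 2 * x / T := by
  rw [le_div_iff₀ hT]
  calc (((Finset.range (x+1)).filter (fun n => T ≤ sumRecip n)).card : ℝ) * T
      = ∑ _n ∈ (Finset.range (x+1)).filter (fun n => T ≤ sumRecip n), T := by
        rw [Finset.sum_const, nsmul_eq_mul]
    _ ≤ ∑ n ∈ (Finset.range (x+1)).filter (fun n => T ≤ sumRecip n), sumRecip n :=
        Finset.sum_le_sum (fun n hn => (Finset.mem_filter.mp hn).2)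
    _ ≤ ∑ n ∈ Finset.range (x+1), sumRecip n :=
        Finset.sum_le_sum_of_subset_of_nonneg (Finset.filter_subset _ _)
          (fun n _ _ => sumRecip_nonneg n)
    _ ≤ 2 * x := sumRecip_avg x

/-- **Theorem 4 (paper).** There is a constant `c₀ > 0` such that
`φ(N)/N > c₀ / log log log N` for almost every integer `N`; equivalently, the set of
`N ≥ 16` with `φ(N)/N ≤ c₀ / log log log N` has natural density zero. -/
theorem totient_ratio_ae_lower_bound :
    ∃ c₀ : ℝ, 0 < c₀ ∧
      Filter.Tendsto
        (fun x : ℕ =>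
          (((Finset.range (x + 1)).filter
            (fun n : ℕ => 16 ≤ n ∧
              (Nat.totient n : ℝ) / (n : ℝ) ≤
                c₀ / Real.log (Real.log (Real.log (n : ℝ))))).card : ℝ) / (x : ℝ))
        Filter.atTop (nhds 0) := by
  refine ⟨1, one_pos, ?_⟩
  rw [NormedAddCommGroup.tendsto_nhds_zero]
  intro ε hε
  set T : ℝ := 4 / ε with hTdef
  have hT : 0 < T := by positivity
  have hL : Filter.Tendsto (fun n : ℕ => Real.log (Real.log (Real.log (n:ℝ))))
      Filter.atTop Filter.atTop :=
    Real.tendsto_log_atTop.comp (Real.tendsto_log_atTop.comp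
      (Real.tendsto_log_atTop.comp tendsto_natCast_atTop_atTop))
  obtain ⟨M, hM⟩ := Filter.eventually_atTop.mp (hL.eventually_ge_atTop (Real.exp (2*T)))
  -- subset claim
  have hsub : ∀ x : ℕ,
      (Finset.range (x + 1)).filter
        (fun n : ℕ => 16 ≤ n ∧
          (Nat.totient n : ℝ) / (n : ℝ) ≤
            1 / Real.log (Real.log (Real.log (n : ℝ))))
      ⊆ Finset.range M ∪ (Finset.range (x+1)).filter (fun n => T ≤ sumRecip n) := by
    intro x n hn
    rw [Finset.mem_filter] at hn
    obtain ⟨hnx, hn16, hratio⟩ := hn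
    rcases Nat.lt_or_ge n M with h | h
    · exact Finset.mem_union_left _ (Finset.mem_range.mpr h)
    · refine Finset.mem_union_right _ (Finset.mem_filter.mpr ⟨hnx, ?_⟩)
      have hLn : Real.exp (2*T) ≤ Real.log (Real.log (Real.log (n:ℝ))) := hM n h
      have hchain : Real.exp (-2 * sumRecip n) ≤ Real.exp (-(2*T)) := by
        calc Real.exp (-2 * sumRecip n) ≤ (Nat.totient n : ℝ) / n :=
              exp_le_ratio n (by omega)
          _ ≤ 1 / Real.log (Real.log (Real.log (n:ℝ))) := hratio
          _ ≤ 1 / Real.exp (2*T) :=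
              one_div_le_one_div_of_le (Real.exp_pos _) hLn
          _ = Real.exp (-(2*T)) := by rw [Real.exp_neg, one_div]
      have := Real.exp_le_exp.mp hchain
      linarith
  -- eventually bound
  have h1 : ∀ᶠ x : ℕ in Filter.atTop, (M:ℝ)/x < ε/4 :=
    (tendsto_const_div_atTop_nhds_zero_nat (M:ℝ)).eventually_lt_const (by positivity)
  filter_upwards [h1, Filter.eventually_ge_atTop 1] with x hx hx1
  have hx0 : (0:ℝ) < (x:ℝ) := by exact_mod_cast hx1
  set S := (Finset.range (x + 1)).filter
      (fun n : ℕ => 16 ≤ n ∧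
        (Nat.totient n : ℝ) / (n : ℝ) ≤
          1 / Real.log (Real.log (Real.log (n : ℝ)))) with hS
  have hcard : (S.card : ℝ) ≤ (M : ℝ) + 2 * x / T := by
    have h2 : S.card ≤ M + ((Finset.range (x+1)).filter (fun n => T ≤ sumRecip n)).card := by
      calc S.card ≤ (Finset.range M ∪ (Finset.range (x+1)).filter
            (fun n => T ≤ sumRecip n)).card := Finset.card_le_card (hsub x)
        _ ≤ M + _ := by
            simpa using Finset.card_union_le (Finset.range M) _
    calc (S.card : ℝ) ≤ (M : ℝ) +
        (((Finset.range (x+1)).filter (fun n => T ≤ sumRecip n)).card : ℝ) := by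
          exact_mod_cast h2
      _ ≤ (M : ℝ) + 2 * x / T := by linarith [markov x T hT]
  have hnonneg : (0:ℝ) ≤ (S.card : ℝ) / x := by positivity
  rw [Real.norm_eq_abs, abs_of_nonneg hnonneg]
  have h2T : 2 / T = ε / 2 := by
    rw [hTdef]; field_simp; ring
  calc (S.card : ℝ) / x ≤ ((M : ℝ) + 2 * x / T) / x := by gcongr
    _ = (M:ℝ)/x + 2/T := by field_simp
    _ < ε/4 + ε/2 := by rw [h2T]; linarith
    _ < ε := by linarith
end

section
/- There exist constants a, b with 0 < a < 1 < b and a real x_0 such that for all real x ≥ x_0, one has a·x < ϑ(x) < b·x, where ϑ(x) = ∑_{p ≤ x, p prime} log p is the Chebyshev theta function. -/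
open Finset Filter Asymptotics

/-- The first Chebyshev function `ϑ(x) = ∑_{p ≤ x} log p`, summing over primes `p ≤ x`. -/
noncomputable def chebyshevTheta (x : ℝ) : ℝ :=
  ∑ p ∈ (Finset.range (⌊x⌋₊ + 1)).filter Nat.Prime, Real.log p

lemma theta_eq (x : ℝ) : chebyshevTheta x = Real.log (primorial ⌊x⌋₊) := by
  rw [chebyshevTheta, primorial, Nat.cast_prod, Real.log_prod]
  intro p hp
  exact_mod_cast (Finset.mem_filter.1 hp).2.pos.ne'

lemma theta_mono : Monotone chebyshevTheta := by
  intro x y hxy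
  rw [theta_eq, theta_eq]
  apply Real.log_le_log (by exact_mod_cast primorial_pos _)
  have : primorial ⌊x⌋₊ ≤ primorial ⌊y⌋₊ :=
    Nat.le_of_dvd (primorial_pos _)
      (Finset.prod_dvd_prod_of_subset _ _ _
        (Finset.filter_subset_filter _ (Finset.range_subset_range.2
          (Nat.add_le_add_right (Nat.floor_le_floor hxy) 1))))
  exact_mod_cast this

lemma centralBinom_le (n : ℕ) (hn : 1 ≤ n) :
    Nat.centralBinom n ≤ (2*n)^(Nat.sqrt (2*n) + 1) * primorial (2*n) := by
  have h2n : 0 < 2*n := by omega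
  set ν : ℕ → ℕ := fun p => (Nat.centralBinom n).factorization p with hν
  have h1 : Nat.centralBinom n = ∏ p ∈ (range (2*n+1)).filter Nat.Prime, p ^ ν p := by
    rw [← Nat.prod_pow_factorization_centralBinom n]
    refine (Finset.prod_subset (Finset.filter_subset _ _) ?_).symm
    intro p hp hnp
    rw [Finset.mem_filter, not_and] at hnp
    show p ^ (Nat.centralBinom n).factorization p = 1
    simp [Nat.factorization_eq_zero_of_not_prime _ (hnp hp)]
  rw [h1, ← Finset.prod_filter_mul_prod_filter_not ((range (2*n+1)).filter Nat.Prime)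
    (fun p => p*p ≤ 2*n)]
  apply Nat.mul_le_mul
  · calc ∏ p ∈ ((range (2*n+1)).filter Nat.Prime).filter (fun p => p*p ≤ 2*n), p ^ ν p
        ≤ ∏ _p ∈ ((range (2*n+1)).filter Nat.Prime).filter (fun p => p*p ≤ 2*n), (2*n) := by
          apply Finset.prod_le_prod'
          intro p hp
          exact Nat.pow_factorization_choose_le h2n
      _ = (2*n) ^ (((range (2*n+1)).filter Nat.Prime).filter (fun p => p*p ≤ 2*n)).card := by
          rw [Finset.prod_const]
      _ ≤ (2*n) ^ (Nat.sqrt (2*n) + 1) := by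
          apply Nat.pow_le_pow_right (by omega)
          have : ((range (2*n+1)).filter Nat.Prime).filter (fun p => p*p ≤ 2*n) ⊆
              range (Nat.sqrt (2*n) + 1) := by
            intro p hp
            rw [Finset.mem_filter] at hp
            rw [Finset.mem_range, Nat.lt_succ_iff, Nat.le_sqrt']
            rw [pow_two]; exact hp.2
          simpa using Finset.card_le_card this
  · calc ∏ p ∈ ((range (2*n+1)).filter Nat.Prime).filter (fun p => ¬ p*p ≤ 2*n), p ^ ν p
        ≤ ∏ p ∈ ((range (2*n+1)).filter Nat.Prime).filter (fun p => ¬ p*p ≤ 2*n), p := by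
          apply Finset.prod_le_prod'
          intro p hp
          rw [Finset.mem_filter, Finset.mem_filter] at hp
          have hp1 : 1 ≤ p := hp.1.2.one_lt.le
          have hν1 : ν p ≤ 1 := by
            apply Nat.factorization_choose_le_one
            calc 2*n < p*p := by omega
            _ = p^2 := by ring
          calc p ^ ν p ≤ p ^ 1 := Nat.pow_le_pow_right hp1 hν1
          _ = p := pow_one p
      _ ≤ primorial (2*n) := by
          apply Nat.le_of_dvd (primorial_pos _)
          exact Finset.prod_dvd_prod_of_subset _ _ _ (Finset.filter_subset _ _)

lemma four_pow_le (n : ℕ) (hn : 1 ≤ n) :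
    4^n ≤ (2*n+1) * ((2*n)^(Nat.sqrt (2*n) + 1) * primorial (2*n)) := by
  calc 4^n ≤ (2*n+1) * (2*n).choose n := Nat.four_pow_le_two_mul_add_one_mul_central_binom n
  _ ≤ _ := Nat.mul_le_mul_left _ (centralBinom_le n hn)

lemma log_primorial_lower (n : ℕ) (hn : 1 ≤ n) :
    (n:ℝ) * Real.log 4 - Real.log (2*(n:ℝ)+1) - ((Nat.sqrt (2*n) : ℝ) + 1) * Real.log (2*(n:ℝ))
      ≤ Real.log (primorial (2*n)) := by
  have key : (4:ℝ)^n ≤ (2*(n:ℝ)+1) * ((2*(n:ℝ))^(Nat.sqrt (2*n) + 1) * (primorial (2*n) : ℝ)) := by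
    exact_mod_cast four_pow_le n hn
  have h4 : (0:ℝ) < 4^n := by positivity
  have hn0 : (0:ℝ) < (n:ℝ) := by exact_mod_cast hn
  have h2n : (0:ℝ) < 2*(n:ℝ) := by linarith
  have hl := Real.log_le_log h4 key
  rw [Real.log_pow, Real.log_mul (by linarith) (mul_ne_zero (pow_ne_zero _ h2n.ne') (by exact_mod_cast (primorial_pos (2*n)).ne')),
    Real.log_mul (pow_ne_zero _ h2n.ne') (by exact_mod_cast (primorial_pos (2*n)).ne'),
    Real.log_pow] at hl
  push_cast at hl ⊢
  linarith

lemma u_tendsto : Filter.Tendsto (fun x : ℝ => (Real.sqrt x + 2) * Real.log (x+1) / x)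
    atTop (nhds 0) := by
  have h0 : Filter.Tendsto (fun x : ℝ => 6 * (Real.log x / Real.sqrt x)) atTop (nhds 0) := by
    have : Filter.Tendsto (fun x : ℝ => Real.log x / Real.sqrt x) atTop (nhds 0) := by
      have h := (isLittleO_log_rpow_atTop (by norm_num : (0:ℝ) < 1/2)).tendsto_div_nhds_zero
      refine h.congr (fun x => ?_)
      rw [Real.sqrt_eq_rpow]
    simpa using this.const_mul 6
  refine tendsto_of_tendsto_of_tendsto_of_le_of_le' tendsto_const_nhds h0 ?_ ?_
  · filter_upwards [Filter.eventually_ge_atTop (1:ℝ)] with x hx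
    have hx0 : (0:ℝ) < x := by linarith
    have h1 : (0:ℝ) ≤ Real.sqrt x + 2 := by positivity
    have h2 : (0:ℝ) ≤ Real.log (x+1) := Real.log_nonneg (by linarith)
    positivity
  · filter_upwards [Filter.eventually_ge_atTop (2:ℝ)] with x hx
    have hx0 : (0:ℝ) < x := by linarith
    have hs : Real.sqrt x * Real.sqrt x = x := Real.mul_self_sqrt hx0.le
    have hs1 : (1:ℝ) ≤ Real.sqrt x := by
      rw [show (1:ℝ) = Real.sqrt 1 by simp]; exact Real.sqrt_le_sqrt (by linarith)
    have hlx : (0:ℝ) ≤ Real.log x := Real.log_nonneg (by linarith)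
    have hl2 : Real.log (x+1) ≤ 2 * Real.log x := by
      rw [show 2 * Real.log x = Real.log (x^2) by rw [Real.log_pow]; push_cast; ring]
      apply Real.log_le_log (by linarith)
      nlinarith
    have hl1 : (0:ℝ) ≤ Real.log (x+1) := Real.log_nonneg (by linarith)
    rw [div_le_iff₀ hx0, mul_comm (6 * (Real.log x / Real.sqrt x)) x, ← mul_assoc]
    have hxs : x * 6 * (Real.log x / Real.sqrt x) = 6 * Real.log x * Real.sqrt x := by
      field_simp
      nlinarith
    rw [hxs]
    nlinarith [mul_le_mul_of_nonneg_left hl2 (by linarith : (0:ℝ) ≤ Real.sqrt x + 2)]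

lemma theta_lower (x : ℝ) (hx : 4 ≤ x) :
    x * Real.log 2 - 2*Real.log 2 - (Real.sqrt x + 2) * Real.log (x+1) ≤ chebyshevTheta x := by
  set n := ⌊x/2⌋₊ with hn
  have hx0 : (0:ℝ) < x := by linarith
  have hn1 : 1 ≤ n := Nat.le_floor (by norm_num; linarith)
  have hnn : (1:ℝ) ≤ (n:ℝ) := by exact_mod_cast hn1
  have h2nx : 2*(n:ℝ) ≤ x := by
    have := Nat.floor_le (by linarith : (0:ℝ) ≤ x/2)
    rw [← hn] at this; linarith
  have hxn : x/2 < (n:ℝ) + 1 := by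
    have := Nat.lt_floor_add_one (x/2); rw [← hn] at this; exact_mod_cast this
  have hmono : chebyshevTheta ((2*n : ℕ) : ℝ) ≤ chebyshevTheta x := theta_mono (by push_cast; linarith)
  have heq : chebyshevTheta ((2*n : ℕ) : ℝ) = Real.log (primorial (2*n)) := by
    rw [theta_eq, Nat.floor_natCast]
  have hlow := log_primorial_lower n hn1
  -- bounds
  have hlog4 : Real.log 4 = 2 * Real.log 2 := by
    rw [show (4:ℝ) = 2^2 by norm_num, Real.log_pow]; push_cast; ring
  have hl4nn : (0:ℝ) ≤ Real.log 4 := Real.log_nonneg (by norm_num)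
  have hb1 : (x/2 - 1) * Real.log 4 ≤ (n:ℝ) * Real.log 4 := by nlinarith
  have hb2 : Real.log (2*(n:ℝ)+1) ≤ Real.log (x+1) := Real.log_le_log (by linarith) (by linarith)
  have hsq : ((Nat.sqrt (2*n) : ℝ)) ≤ Real.sqrt x := by
    rw [show ((Nat.sqrt (2*n) : ℝ)) = ((Nat.sqrt (2*n) : ℕ) : ℝ) by norm_cast]
    rw [Real.le_sqrt (by positivity) hx0.le]
    have h1 : (Nat.sqrt (2*n))^2 ≤ 2*n := Nat.sqrt_le' (2*n)
    have : ((Nat.sqrt (2*n) : ℝ))^2 ≤ 2*(n:ℝ) := by exact_mod_cast h1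
    nlinarith
  have hlog2n : Real.log (2*(n:ℝ)) ≤ Real.log (x+1) := Real.log_le_log (by linarith) (by linarith)
  have hlog2nn : (0:ℝ) ≤ Real.log (2*(n:ℝ)) := Real.log_nonneg (by linarith)
  have hlogx1 : (0:ℝ) ≤ Real.log (x+1) := Real.log_nonneg (by linarith)
  have hsqnn : (0:ℝ) ≤ Real.sqrt x := Real.sqrt_nonneg x
  have hb3 : ((Nat.sqrt (2*n) : ℝ) + 1) * Real.log (2*(n:ℝ)) ≤ (Real.sqrt x + 1) * Real.log (x+1) := by
    apply mul_le_mul (by linarith) hlog2n hlog2nn (by linarith)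
  calc x * Real.log 2 - 2*Real.log 2 - (Real.sqrt x + 2) * Real.log (x+1)
      = (x/2 - 1) * Real.log 4 - Real.log (x+1) - (Real.sqrt x + 1) * Real.log (x+1) := by
        rw [hlog4]; ring
    _ ≤ (n:ℝ) * Real.log 4 - Real.log (2*(n:ℝ)+1) - ((Nat.sqrt (2*n) : ℝ) + 1) * Real.log (2*(n:ℝ)) := by
        linarith
    _ ≤ Real.log (primorial (2*n)) := hlow
    _ = chebyshevTheta ((2*n : ℕ) : ℝ) := heq.symm
    _ ≤ chebyshevTheta x := hmono

lemma g_tendsto : Filter.Tendsto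
    (fun x : ℝ => x * Real.log 2 - 2*Real.log 2 - (Real.sqrt x + 2) * Real.log (x+1) - x/2)
    atTop atTop := by
  have hc : (0:ℝ) < Real.log 2 - 1/2 := by
    have := Real.log_two_gt_d9; linarith
  have h1 : Filter.Tendsto (fun x : ℝ => (Real.log 2 - 1/2) - (Real.sqrt x + 2) * Real.log (x+1) / x)
      atTop (nhds (Real.log 2 - 1/2)) := by
    simpa using (tendsto_const_nhds.sub u_tendsto)
  have h2 := Filter.Tendsto.atTop_mul_pos hc tendsto_id h1
  have h3 := tendsto_atTop_add_const_right atTop (-(2*Real.log 2)) h2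
  refine h3.congr' ?_
  filter_upwards [Filter.eventually_gt_atTop (0:ℝ)] with x hx
  field_simp
  simp only [id]
  ring

/-- **Theorem 5(i) (Chebyshev).** There are constants `0 < a < 1 < b` and `x₀` such that
`a·x < ϑ(x) < b·x` for all `x ≥ x₀`. -/
theorem chebyshevTheta_linear_bounds :
    ∃ a b : ℝ, 0 < a ∧ a < 1 ∧ 1 < b ∧ ∃ x₀ : ℝ, ∀ x : ℝ, x₀ ≤ x →
      a * x < chebyshevTheta x ∧ chebyshevTheta x < b * x := by
  refine ⟨1/2, 2, by norm_num, by norm_num, by norm_num, ?_⟩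
  obtain ⟨x₁, hx₁⟩ := (Filter.eventually_atTop).1 (g_tendsto.eventually_gt_atTop 0)
  refine ⟨max x₁ 4, fun x hx => ?_⟩
  have hx4 : (4:ℝ) ≤ x := le_trans (le_max_right _ _) hx
  have hxx₁ : x₁ ≤ x := le_trans (le_max_left _ _) hx
  have hx0 : (0:ℝ) < x := by linarith
  constructor
  · have hg := hx₁ x hxx₁
    have hl := theta_lower x hx4
    linarith
  · have : chebyshevTheta x ≤ x * Real.log 4 := by
      rw [theta_eq]
      calc Real.log (primorial ⌊x⌋₊) ≤ Real.log ((4:ℝ)^(⌊x⌋₊)) := by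
            apply Real.log_le_log (by exact_mod_cast primorial_pos _)
            exact_mod_cast primorial_le_4_pow ⌊x⌋₊
        _ = (⌊x⌋₊ : ℝ) * Real.log 4 := Real.log_pow _ _
        _ ≤ x * Real.log 4 := by
            apply mul_le_mul_of_nonneg_right (Nat.floor_le hx0.le)
            exact Real.log_nonneg (by norm_num)
    have hlog4 : Real.log 4 < 2 := by
      have h2 := Real.log_two_lt_d9
      have : Real.log 4 = 2 * Real.log 2 := by
        rw [show (4:ℝ) = 2^2 by norm_num, Real.log_pow]; push_cast; ring
      linarith
    calc chebyshevTheta x ≤ x * Real.log 4 := this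
      _ < x * 2 := by exact mul_lt_mul_of_pos_left hlog4 hx0
      _ = 2 * x := by ring
end

section
/- There exist a constant B_1 (the Mertens constant) and C > 0 such that for all real x ≥ 2, |∑_{p ≤ x, p prime} 1/p − log(log x) − B_1| ≤ C / log x. -/
open Finset Real
namespace Mertens

noncomputable def a (n : ℕ) : ℝ := if n.Prime then Real.log n / n else 0

noncomputable def T (N : ℕ) : ℝ := ∑ n ∈ range (N + 1), a n

noncomputable def b (n : ℕ) : ℝ := 1 / Real.log n

lemma T_eq (N : ℕ) : T N = ∑ p ∈ (range (N + 1)).filter Nat.Prime, Real.log p / p := by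
  rw [T, Finset.sum_filter]; rfl

lemma S_eq (N : ℕ) :
    (∑ p ∈ (range (N + 1)).filter Nat.Prime, (1 : ℝ) / p) =
      ∑ n ∈ range (N + 1), a n * b n := by
  rw [Finset.sum_filter]
  refine Finset.sum_congr rfl fun n _ => ?_
  by_cases hn : n.Prime
  · have h2 : 2 ≤ n := hn.two_le
    have hlog : Real.log n ≠ 0 := by
      have : (1:ℝ) < n := by exact_mod_cast Nat.lt_of_lt_of_le one_lt_two h2
      exact ne_of_gt (Real.log_pos this)
    simp [hn, a, b]
    field_simp
  · simp [hn, a]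

lemma theta_le (N : ℕ) :
    ∑ p ∈ (range (N + 1)).filter Nat.Prime, Real.log p ≤ N * Real.log 4 := by
  have h1 : Real.log (primorial N) = ∑ p ∈ (range (N + 1)).filter Nat.Prime, Real.log p := by
    rw [primorial, Nat.cast_prod, Real.log_prod]
    intro p hp
    have := (Finset.mem_filter.mp hp).2.pos
    positivity
  have h2 : Real.log (primorial N) ≤ Real.log (4 ^ N) := by
    apply Real.log_le_log (by exact_mod_cast (primorial_pos N))
    exact_mod_cast primorial_le_4_pow N
  rw [h1] at h2
  calc _ ≤ Real.log ((4:ℝ) ^ N) := h2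
    _ = N * Real.log 4 := by rw [Real.log_pow]


lemma log_succ_sub_le {n : ℕ} (hn : 1 ≤ n) :
    Real.log (n + 1) - Real.log n ≤ 1 / n := by
  have hn' : (0:ℝ) < n := by exact_mod_cast hn
  rw [← Real.log_div (by positivity) (ne_of_gt hn')]
  have := Real.log_le_sub_one_of_pos (x := ((n:ℝ)+1)/n) (by positivity)
  calc Real.log ((↑n + 1)/ ↑n) ≤ (↑n + 1)/↑n - 1 := this
    _ = 1 / n := by field_simp; ring
lemma le_log_succ_sub {n : ℕ} (hn : 1 ≤ n) :
    1 / ((n:ℝ) + 1) ≤ Real.log (n + 1) - Real.log n := by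
  have hn' : (0:ℝ) < n := by exact_mod_cast hn
  have h := Real.log_le_sub_one_of_pos (x := (n:ℝ)/(n+1)) (by positivity)
  have hd : Real.log ((n:ℝ)/(n+1)) = Real.log n - Real.log (n+1) :=
    Real.log_div (ne_of_gt hn') (by positivity)
  rw [hd] at h
  have : (n:ℝ)/(n+1) - 1 = -(1/(n+1)) := by field_simp; ring
  linarith [this ▸ h]

lemma log_factorial_bounds : ∀ N : ℕ, 1 ≤ N →
    (N:ℝ) * Real.log N - N + 1 ≤ Real.log (Nat.factorial N : ℝ) ∧
      Real.log (Nat.factorial N : ℝ) ≤ (N:ℝ) * Real.log N - N + 1 + Real.log N := by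
  intro N
  induction N with
  | zero => intro h; omega
  | succ n ih =>
    intro _
    by_cases hn : 1 ≤ n
    · obtain ⟨ih1, ih2⟩ := ih hn
      have hfac : Real.log (Nat.factorial (n+1) : ℝ) = Real.log (Nat.factorial n : ℝ) + Real.log (n+1) := by
        rw [Nat.factorial_succ]
        push_cast
        rw [Real.log_mul (by positivity) (by positivity), add_comm]
      have h1 := log_succ_sub_le hn
      have h2 := le_log_succ_sub hn
      have hn' : (0:ℝ) < n := by exact_mod_cast hn
      have e1 : (n:ℝ) * (Real.log (n+1) - Real.log n) ≤ 1 := by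
        have := mul_le_mul_of_nonneg_left h1 hn'.le
        rwa [mul_one_div, div_self (ne_of_gt hn')] at this
      have e2 : 1 ≤ ((n:ℝ)+1) * (Real.log (n+1) - Real.log n) := by
        have h0 : (0:ℝ) < (n:ℝ)+1 := by positivity
        have := mul_le_mul_of_nonneg_left h2 h0.le
        rwa [mul_one_div, div_self (ne_of_gt h0)] at this
      constructor
      · push_cast
        rw [hfac]
        push_cast at ih1 ⊢
        nlinarith [e1]
      · push_cast
        rw [hfac]
        push_cast at ih2 ⊢
        nlinarith [e2, h1, hn']
    · have hn0 : n = 0 := by omega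
      subst hn0
      simp

lemma log_le_two_sqrt {x : ℝ} (hx : 1 ≤ x) : Real.log x ≤ 2 * Real.sqrt x := by
  have h1 : Real.log (Real.sqrt x) ≤ Real.sqrt x - 1 :=
    Real.log_le_sub_one_of_pos (Real.sqrt_pos.mpr (by linarith))
  have h2 : Real.log x = 2 * Real.log (Real.sqrt x) := by
    rw [Real.log_sqrt (by linarith)]; ring
  have h3 : (0:ℝ) ≤ Real.sqrt x := Real.sqrt_nonneg x
  linarith

lemma term_le_telescope {n : ℕ} (hn : 2 ≤ n) :
    Real.log n / (n:ℝ)^2 ≤ 4 * (1 / Real.sqrt ((n:ℝ) - 1) - 1 / Real.sqrt n) := by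
  have hn' : (2:ℝ) ≤ (n:ℝ) := by exact_mod_cast hn
  set u := Real.sqrt ((n:ℝ) - 1) with hu
  set v := Real.sqrt (n:ℝ) with hv
  have hu2 : u^2 = (n:ℝ) - 1 := Real.sq_sqrt (by linarith)
  have hv2 : v^2 = (n:ℝ) := Real.sq_sqrt (by linarith)
  have hu1 : 1 ≤ u := by
    have : Real.sqrt 1 ≤ u := Real.sqrt_le_sqrt (by linarith)
    simpa using this
  have hv1 : (1:ℝ) ≤ v := by
    have : Real.sqrt 1 ≤ v := Real.sqrt_le_sqrt (by linarith)
    simpa using this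
  have huv : u ≤ v := Real.sqrt_le_sqrt (by linarith)
  have hu0 : (0:ℝ) < u := by linarith
  have hv0 : (0:ℝ) < v := by linarith
  have hlog : Real.log n ≤ 2 * v := log_le_two_sqrt (by linarith)
  have h1 : (v - u) * (v + u) = 1 := by nlinarith
  have hval : 1/u - 1/v = 1/(u*v*(u+v)) := by
    have huv0 : (0:ℝ) < u + v := by linarith
    field_simp
    linear_combination h1
  have hn2 : ((n:ℝ))^2 = v^4 := by nlinarith [hv2]
  have hle : u*v*(u+v) ≤ 2*v^3 := by nlinarith
  have hkey : 2 * v / (n:ℝ)^2 ≤ 4 * (1/u - 1/v) := by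
    rw [hval, hn2]
    have e1 : 2*v/v^4 = 4*(1/(2*v^3)) := by
      field_simp; ring
    rw [e1]
    have e2 : 1/(2*v^3) ≤ 1/(u*v*(u+v)) :=
      one_div_le_one_div_of_le (by positivity) hle
    linarith
  calc Real.log n / (n:ℝ)^2 ≤ (2*v) / (n:ℝ)^2 := by gcongr
    _ ≤ 4 * (1/u - 1/v) := hkey

lemma sum_log_div_sq_le (N : ℕ) :
    ∑ p ∈ (range (N + 1)).filter Nat.Prime, Real.log p / (p:ℝ)^2 ≤ 4 := by
  have hsub : (range (N + 1)).filter Nat.Prime ⊆ Ico 2 (N+1) := by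
    intro p hp
    rcases Finset.mem_filter.mp hp with ⟨h1, h2⟩
    exact Finset.mem_Ico.mpr ⟨h2.two_le, Finset.mem_range.mp h1⟩
  have h1 : ∑ p ∈ (range (N + 1)).filter Nat.Prime, Real.log p / (p:ℝ)^2 ≤
      ∑ n ∈ Ico 2 (N+1), Real.log n / (n:ℝ)^2 := by
    apply Finset.sum_le_sum_of_subset_of_nonneg hsub
    intro n hn _
    have h2 : 2 ≤ n := (Finset.mem_Ico.mp hn).1
    have : (1:ℝ) ≤ n := by exact_mod_cast Nat.one_le_of_lt h2
    have := Real.log_nonneg this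
    positivity
  have h2 : ∑ n ∈ Ico 2 (N+1), Real.log n / (n:ℝ)^2 ≤
      ∑ n ∈ Ico 2 (N+1), 4 * (1 / Real.sqrt ((n:ℝ) - 1) - 1 / Real.sqrt n) := by
    apply Finset.sum_le_sum
    intro n hn
    exact term_le_telescope (Finset.mem_Ico.mp hn).1
  set f : ℕ → ℝ := fun i => 4 / Real.sqrt ((i:ℝ)+1) with hf
  have h3 : ∑ n ∈ Ico 2 (N+1), 4 * (1 / Real.sqrt ((n:ℝ) - 1) - 1 / Real.sqrt n) ≤ 4 := by
    rw [Finset.sum_Ico_eq_sum_range]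
    have heq : ∀ j ∈ range (N+1-2),
        4 * (1 / Real.sqrt (((2+j:ℕ):ℝ) - 1) - 1 / Real.sqrt ((2+j:ℕ):ℝ)) = f j - f (j+1) := by
      intro j _
      rw [hf]
      push_cast
      have e1 : ((2:ℝ)+j) - 1 = (j:ℝ)+1 := by ring
      have e2 : ((2:ℝ)+(j:ℝ)) = ((j:ℝ)+1)+1 := by ring
      rw [e1, e2]
      ring
    rw [Finset.sum_congr rfl heq, Finset.sum_range_sub' f]
    have h4 : (0:ℝ) ≤ f (N+1-2) := by rw [hf]; positivity
    have h5 : f 0 = 4 := by rw [hf]; norm_num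
    linarith
  linarith


lemma log_factorial_eq (N : ℕ) :
    Real.log (Nat.factorial N : ℝ) =
      ∑ p ∈ (range (N + 1)).filter Nat.Prime,
        (padicValNat p (Nat.factorial N) : ℝ) * Real.log p := by
  have h0 : Nat.factorial N ≠ 0 := Nat.factorial_ne_zero N
  have h := Nat.prod_pow_prime_padicValNat (Nat.factorial N) h0 (Nat.factorial N + 1)
    (Nat.lt_succ_self _)
  have h1 : Real.log (Nat.factorial N : ℝ) =
      ∑ p ∈ (range (Nat.factorial N + 1)).filter Nat.Prime,
        (padicValNat p (Nat.factorial N) : ℝ) * Real.log p := by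
    conv_lhs => rw [← h]
    push_cast
    rw [Real.log_prod]
    · refine Finset.sum_congr rfl fun p hp => ?_
      rw [Real.log_pow]
    · intro p hp
      have hp' := (Finset.mem_filter.mp hp).2
      have := hp'.pos
      positivity
  rw [h1, eq_comm]
  apply Finset.sum_subset
  · apply Finset.filter_subset_filter
    intro x hx
    rw [Finset.mem_range] at *
    have := Nat.self_le_factorial N
    omega
  · intro p hp hnp
    have hp' : p.Prime := (Finset.mem_filter.mp hp).2
    have hpN : N < p := by
      by_contra hc
      push_neg at hc
      exact hnp (Finset.mem_filter.mpr ⟨Finset.mem_range.mpr (by omega), hp'⟩)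
    have hd : ¬ p ∣ Nat.factorial N := by
      rw [Nat.Prime.dvd_factorial hp']
      omega
    rw [padicValNat.eq_zero_of_not_dvd hd]
    simp

lemma geom_le_two {r : ℝ} (h0 : 0 ≤ r) (h : r ≤ 1/2) (m : ℕ) : ∑ j ∈ range m, r^j ≤ 2 := by
  have hr1 : r ≠ 1 := by linarith
  rw [geom_sum_eq hr1]
  have h1 : (0:ℝ) ≤ r^m := by positivity
  have h2 : r - 1 < 0 := by linarith
  rw [div_le_iff_of_neg h2]
  nlinarith

lemma padic_bounds {p N : ℕ} (hp : p.Prime) (hpN : p ≤ N) :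
    (N:ℝ)/p - 1 ≤ (padicValNat p (Nat.factorial N) : ℝ) ∧
      (padicValNat p (Nat.factorial N) : ℝ) ≤ (N:ℝ)/p + 2*N/(p:ℝ)^2 := by
  haveI : Fact p.Prime := ⟨hp⟩
  have hp2 : 2 ≤ p := hp.two_le
  have hp0 : (0:ℝ) < p := by exact_mod_cast hp.pos
  set b := Nat.log p N + 1 with hb
  rw [padicValNat_factorial (show Nat.log p N < b by omega)]
  have hbge : 2 ≤ b := by
    have : 1 ≤ Nat.log p N := Nat.le_log_of_pow_le hp.one_lt (by simpa using hpN)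
    omega
  have hmem : (1:ℕ) ∈ Ico 1 b := Finset.mem_Ico.mpr ⟨le_refl _, by omega⟩
  have hcast : ((∑ i ∈ Ico 1 b, N / p ^ i : ℕ) : ℝ) = ∑ i ∈ Ico 1 b, ((N / p ^ i : ℕ) : ℝ) := by
    push_cast; rfl
  rw [hcast]
  constructor
  · -- lower bound
    have h1 : ((N / p : ℕ) : ℝ) ≤ ∑ i ∈ Ico 1 b, ((N / p ^ i : ℕ) : ℝ) := by
      have := Finset.single_le_sum (f := fun i => ((N / p ^ i : ℕ) : ℝ))
        (fun i _ => by positivity) hmem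
      simpa using this
    have h2 : (N:ℝ)/p - 1 ≤ ((N / p : ℕ) : ℝ) := by
      have hq := Nat.div_add_mod N p
      have hr : N % p < p := Nat.mod_lt _ hp.pos
      have he : (N:ℝ) = p * ((N/p : ℕ):ℝ) + ((N % p : ℕ):ℝ) := by exact_mod_cast hq.symm
      have hrr : ((N % p : ℕ):ℝ) < p := by exact_mod_cast hr
      rw [sub_le_iff_le_add, div_le_iff₀ hp0]
      nlinarith
    linarith
  · -- upper bound
    rw [Finset.sum_eq_sum_Ico_succ_bot (by omega : 1 < b)]
    have hfirst : ((N / p ^ 1 : ℕ) : ℝ) ≤ (N:ℝ)/p := by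
      have := Nat.cast_div_le (α := ℝ) (m := N) (n := p ^ 1)
      simpa using this
    have htail : ∑ i ∈ Ico 2 b, ((N / p ^ i : ℕ) : ℝ) ≤ 2*N/(p:ℝ)^2 := by
      have h1 : ∀ i ∈ Ico 2 b, ((N / p ^ i : ℕ) : ℝ) ≤ (N:ℝ) * (1/(p:ℝ))^i := by
        intro i _
        have := Nat.cast_div_le (α := ℝ) (m := N) (n := p ^ i)
        push_cast at this
        calc ((N / p ^ i : ℕ) : ℝ) ≤ (N:ℝ)/(p:ℝ)^i := this
          _ = (N:ℝ) * (1/(p:ℝ))^i := by rw [one_div, inv_pow]; ring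
      calc ∑ i ∈ Ico 2 b, ((N / p ^ i : ℕ) : ℝ)
          ≤ ∑ i ∈ Ico 2 b, (N:ℝ) * (1/(p:ℝ))^i := Finset.sum_le_sum h1
        _ = (N:ℝ) * ∑ i ∈ Ico 2 b, (1/(p:ℝ))^i := by rw [Finset.mul_sum]
        _ ≤ 2*N/(p:ℝ)^2 := by
            set r := 1/(p:ℝ) with hr
            have hr0 : 0 ≤ r := by positivity
            have hr2 : r ≤ 1/2 := by
              rw [hr]
              apply div_le_div_of_nonneg_left one_pos.le two_pos ?_ |>.trans_eq rfl
              exact_mod_cast hp2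
            have hsum : ∑ i ∈ Ico 2 b, r^i = r^2 * ∑ j ∈ range (b-2), r^j := by
              rw [Finset.sum_Ico_eq_sum_range, Finset.mul_sum]
              refine Finset.sum_congr rfl fun j _ => ?_
              rw [← pow_add]
            rw [hsum]
            have hg := geom_le_two hr0 hr2 (b-2)
            have hrp : r^2 = 1/(p:ℝ)^2 := by rw [hr]; field_simp
            have hN0 : (0:ℝ) ≤ N := by positivity
            calc (N:ℝ) * (r^2 * ∑ j ∈ range (b-2), r^j) ≤ (N:ℝ) * (r^2 * 2) := by
                  apply mul_le_mul_of_nonneg_left _ hN0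
                  apply mul_le_mul_of_nonneg_left hg (by positivity)
              _ = 2*N/(p:ℝ)^2 := by rw [hrp]; field_simp
    linarith


noncomputable def c₁ : ℝ := Real.log 4 + 11

lemma c₁_pos : 0 < c₁ := by
  have : (0:ℝ) < Real.log 4 := Real.log_pos (by norm_num)
  rw [c₁]; linarith

theorem mertens_first {N : ℕ} (hN : 2 ≤ N) : |T N - Real.log N| ≤ c₁ := by
  set P := (range (N + 1)).filter Nat.Prime with hP
  have hNR : (2:ℝ) ≤ (N:ℝ) := by exact_mod_cast hN
  -- N * T N = ∑ (N/p) log p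
  have hB : (N:ℝ) * T N = ∑ p ∈ P, ((N:ℝ)/p) * Real.log p := by
    rw [T_eq, Finset.mul_sum]
    refine Finset.sum_congr rfl fun p hp => ?_
    have hp' := (Finset.mem_filter.mp hp).2
    have : (0:ℝ) < p := by exact_mod_cast hp'.pos
    field_simp
  -- |log N! - N T N| ≤ N log 4 + 8 N
  have hdiff : |Real.log (Nat.factorial N : ℝ) - (N:ℝ) * T N| ≤ (N:ℝ) * Real.log 4 + 8*N := by
    rw [log_factorial_eq, hB, ← Finset.sum_sub_distrib]
    have habs : ∀ p ∈ P, |((padicValNat p (Nat.factorial N) : ℝ)) * Real.log p -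
        ((N:ℝ)/p) * Real.log p| ≤ (1 + 2*N/(p:ℝ)^2) * Real.log p := by
      intro p hp
      rcases Finset.mem_filter.mp hp with ⟨hpr, hp'⟩
      have hple : p ≤ N := by
        have := Finset.mem_range.mp hpr; omega
      obtain ⟨hlo, hhi⟩ := padic_bounds hp' hple
      have hlog0 : 0 ≤ Real.log p :=
        Real.log_nonneg (by exact_mod_cast hp'.one_lt.le)
      rw [← sub_mul, abs_mul, abs_of_nonneg hlog0]
      apply mul_le_mul_of_nonneg_right _ hlog0
      rw [abs_le]
      have h2 : (0:ℝ) ≤ 2*N/(p:ℝ)^2 := by positivity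
      constructor <;> [linarith; linarith]
    calc |∑ p ∈ P, ((padicValNat p (Nat.factorial N) : ℝ) * Real.log p - ((N:ℝ)/p) * Real.log p)|
        ≤ ∑ p ∈ P, |(padicValNat p (Nat.factorial N) : ℝ) * Real.log p - ((N:ℝ)/p) * Real.log p| :=
          Finset.abs_sum_le_sum_abs _ _
      _ ≤ ∑ p ∈ P, (1 + 2*N/(p:ℝ)^2) * Real.log p := Finset.sum_le_sum habs
      _ = (∑ p ∈ P, Real.log p) + 2*N * ∑ p ∈ P, Real.log p/(p:ℝ)^2 := by
          rw [Finset.mul_sum, ← Finset.sum_add_distrib]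
          refine Finset.sum_congr rfl fun p hp => ?_
          have hp' := (Finset.mem_filter.mp hp).2
          have : (0:ℝ) < p := by exact_mod_cast hp'.pos
          field_simp
      _ ≤ (N:ℝ) * Real.log 4 + 2*N * 4 := by
          have h1 := theta_le N
          have h2 := sum_log_div_sq_le N
          have hN0 : (0:ℝ) ≤ 2*N := by positivity
          nlinarith [mul_le_mul_of_nonneg_left h2 hN0]
      _ = (N:ℝ) * Real.log 4 + 8*N := by ring
  obtain ⟨hs1, hs2⟩ := log_factorial_bounds N (by omega)
  -- |N T N - N log N + N - 1| ≤ N log 4 + 8N + log N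
  have hlogN : 0 ≤ Real.log N := Real.log_nonneg (by linarith)
  have hlogNle : Real.log N ≤ (N:ℝ) := by
    have := Real.log_le_sub_one_of_pos (show (0:ℝ) < N by linarith)
    linarith
  have hkey : |(N:ℝ) * T N - ((N:ℝ) * Real.log N - N + 1)| ≤
      (N:ℝ) * Real.log 4 + 8*N + Real.log N := by
    rw [abs_le] at hdiff ⊢
    constructor <;> nlinarith [hdiff.1, hdiff.2]
  -- divide by N
  have hN0 : (0:ℝ) < N := by linarith
  rw [abs_le] at hkey ⊢
  have hTl := hkey.1
  have hTu := hkey.2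
  have hc : c₁ = Real.log 4 + 11 := rfl
  constructor
  · rw [hc]
    nlinarith [hTl, hlogNle, hlogN]
  · rw [hc]
    nlinarith [hTu, hlogNle, hlogN]


noncomputable def Δ (n : ℕ) : ℝ := b n - b (n + 1)
noncomputable def E (n : ℕ) : ℝ := T n - Real.log n
noncomputable def g (n : ℕ) : ℝ :=
  (Real.log (Real.log (n + 1)) - Real.log (Real.log n)) - (1 - Real.log n / Real.log (n + 1))

lemma abel (N : ℕ) :
    ∑ n ∈ range (N + 1), a n * b n = T N * b N + ∑ n ∈ range N, T n * Δ n := by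
  induction N with
  | zero => simp [T]
  | succ N ih =>
    rw [Finset.sum_range_succ, ih, Finset.sum_range_succ (f := fun n => T n * Δ n)]
    have hT : T (N + 1) = T N + a (N + 1) := by
      rw [T, T, Finset.sum_range_succ]
    rw [Δ, hT]
    push_cast
    ring

lemma log_pos_of_two_le {n : ℕ} (hn : 2 ≤ n) : 0 < Real.log n :=
  Real.log_pos (by exact_mod_cast Nat.lt_of_lt_of_le Nat.one_lt_two hn)

lemma b_pos {n : ℕ} (hn : 2 ≤ n) : 0 < b n := by
  rw [b]; exact div_pos one_pos (log_pos_of_two_le hn)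

lemma delta_nonneg {n : ℕ} (hn : 2 ≤ n) : 0 ≤ Δ n := by
  rw [Δ, b, b, sub_nonneg]
  apply div_le_div_of_nonneg_left one_pos.le (log_pos_of_two_le hn)
  apply Real.log_le_log (by positivity)
  push_cast; linarith

lemma g_bounds {n : ℕ} (hn : 2 ≤ n) : 0 ≤ g n ∧ g n ≤ 2 / (n:ℝ)^2 := by
  have hnR : (2:ℝ) ≤ (n:ℝ) := by exact_mod_cast hn
  set L := Real.log n with hL
  set L' := Real.log ((n:ℕ) + 1 : ℝ) with hL'
  have hL0 : 0 < L := log_pos_of_two_le hn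
  have hLL' : L < L' := by
    rw [hL, hL']
    apply Real.log_lt_log (by linarith)
    linarith
  have hL'0 : 0 < L' := lt_trans hL0 hLL'
  -- L' > 1 since n+1 ≥ 3 > e
  have hL'1 : 1 < L' := by
    have h9 := Real.exp_one_lt_d9
    have hlt : Real.exp 1 < (n:ℝ)+1 := by norm_num at h9 ⊢; linarith
    rw [hL']
    calc (1:ℝ) = Real.log (Real.exp 1) := (Real.log_exp 1).symm
      _ < Real.log ((n:ℝ)+1) := Real.log_lt_log (Real.exp_pos 1) hlt
  -- δ ≤ 1/n
  have hdelta : L' - L ≤ 1 / n := by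
    rw [hL, hL', ← Real.log_div (by positivity) (by positivity)]
    have := Real.log_le_sub_one_of_pos (x := ((n:ℝ)+1)/n) (by positivity)
    calc Real.log (((n:ℝ)+1)/n) ≤ ((n:ℝ)+1)/n - 1 := this
      _ = 1/n := by field_simp; ring
  -- L' ≤ 2 L  (since n+1 ≤ n²)
  have hL'2L : L' ≤ 2 * L := by
    rw [hL, hL']
    have h1 : ((n:ℝ)+1) ≤ (n:ℝ)^2 := by nlinarith
    calc Real.log ((n:ℝ)+1) ≤ Real.log ((n:ℝ)^2) := Real.log_le_log (by linarith) h1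
      _ = 2 * Real.log n := by rw [show ((n:ℝ)^2) = (n:ℝ)^(2:ℕ) by norm_num, Real.log_pow]; norm_num
  set u := (L' - L) / L' with hu
  have hu0 : 0 < u := by apply div_pos (by linarith) hL'0
  have hu1 : u < 1 := by rw [hu, div_lt_one hL'0]; linarith
  have h1u : 1 - u = L / L' := by rw [hu]; field_simp; ring
  have h1u2 : (1:ℝ)/2 ≤ 1 - u := by
    rw [h1u, le_div_iff₀ hL'0]; linarith
  -- g n = -log(1-u) - u
  have hgeq : g n = -Real.log (1 - u) - u := by
    rw [g, h1u, Real.log_div (ne_of_gt hL0) (ne_of_gt hL'0)]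
    rw [hu]
    push_cast
    rw [← hL, ← hL']
    field_simp
    ring
  have hlow : Real.log (1 - u) ≤ -u := by
    have := Real.log_le_sub_one_of_pos (show (0:ℝ) < 1 - u by linarith)
    linarith
  have hhigh : -Real.log (1 - u) ≤ u / (1 - u) := by
    have h2 : Real.log ((1-u)⁻¹) ≤ (1-u)⁻¹ - 1 :=
      Real.log_le_sub_one_of_pos (by positivity)
    rw [Real.log_inv] at h2
    have : (1-u)⁻¹ - 1 = u/(1-u) := by field_simp; ring
    linarith [this ▸ h2]
  constructor
  · rw [hgeq]; linarith
  · rw [hgeq]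
    have hb : u ≤ 1/n := by
      rw [hu]
      calc (L' - L)/L' ≤ (L' - L)/1 := by
            apply div_le_div_of_nonneg_left (by linarith) one_pos hL'1.le
        _ = L' - L := by ring
        _ ≤ 1/n := hdelta
    have hn0 : (0:ℝ) < n := by linarith
    have hq : u/(1-u) - u = u^2/(1-u) := by field_simp; ring
    have h2u : u^2/(1-u) ≤ 2*u^2 := by
      rw [div_le_iff₀ (by linarith)]
      nlinarith
    have hu2 : u^2 ≤ 1/(n:ℝ)^2 := by
      have := mul_le_mul hb hb hu0.le (by positivity)
      calc u^2 = u*u := sq u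
        _ ≤ (1/n)*(1/n) := this
        _ = 1/(n:ℝ)^2 := by field_simp
    calc -Real.log (1-u) - u ≤ u/(1-u) - u := by linarith
      _ = u^2/(1-u) := hq
      _ ≤ 2*u^2 := h2u
      _ ≤ 2/(n:ℝ)^2 := by rw [show 2/(n:ℝ)^2 = 2*(1/(n:ℝ)^2) by ring]; linarith


noncomputable def gg (n : ℕ) : ℝ := if 2 ≤ n then g n else 0
noncomputable def hh (n : ℕ) : ℝ := if 2 ≤ n then E n * Δ n else 0
noncomputable def Δ' (n : ℕ) : ℝ := if 2 ≤ n then Δ n else 0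

lemma E_bound {n : ℕ} (hn : 2 ≤ n) : |E n| ≤ c₁ := mertens_first hn

lemma gg_nonneg (n : ℕ) : 0 ≤ gg n := by
  rw [gg]; split
  · exact (g_bounds (by assumption)).1
  · exact le_refl 0

lemma gg_le (n : ℕ) : gg n ≤ 2 / (n:ℝ)^2 := by
  rw [gg]; split
  · exact (g_bounds (by assumption)).2
  · positivity

lemma summable_bound : Summable (fun n : ℕ => 2 / (n:ℝ)^2) := by
  have h := (summable_one_div_nat_pow (p := 2)).mpr one_lt_two
  have := h.mul_left 2
  convert this using 2 with n
  all_goals first | rfl | ring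

lemma summable_gg : Summable gg := Summable.of_nonneg_of_le gg_nonneg gg_le summable_bound

lemma sum_range_ite (f : ℕ → ℝ) (M : ℕ) :
    ∑ n ∈ range M, (if 2 ≤ n then f n else 0) = ∑ n ∈ Ico 2 M, f n := by
  rw [← Finset.sum_filter]
  congr 1
  ext x
  simp only [Finset.mem_filter, Finset.mem_range, Finset.mem_Ico]
  omega

lemma sum_delta {N M : ℕ} (h : N ≤ M) : ∑ n ∈ Ico N M, Δ n = b N - b M := by
  rw [Finset.sum_Ico_eq_sum_range]
  have hstep : ∀ j ∈ range (M - N),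
      Δ (N + j) = (fun i => b (N + i)) j - (fun i => b (N + i)) (j + 1) := by
    intro j _
    rfl
  rw [Finset.sum_congr rfl hstep, Finset.sum_range_sub']
  congr 2
  omega

lemma delta'_nonneg (n : ℕ) : 0 ≤ Δ' n := by
  rw [Δ']; split
  · exact delta_nonneg (by assumption)
  · exact le_refl 0

lemma summable_Δ' : Summable Δ' := by
  apply summable_of_sum_range_le (c := b 2) delta'_nonneg
  intro M
  have he : ∑ n ∈ range M, Δ' n = ∑ n ∈ Ico 2 M, Δ n := sum_range_ite Δ M
  rw [he]
  rcases le_or_gt 2 M with h | h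
  · rw [sum_delta h]
    have := (b_pos h).le
    linarith
  · rw [Finset.Ico_eq_empty (by omega)]
    simpa using (b_pos (le_refl 2)).le

lemma abs_hh_le (n : ℕ) : |hh n| ≤ c₁ * Δ' n := by
  rw [hh, Δ']
  split
  · rename_i h
    rw [abs_mul, abs_of_nonneg (delta_nonneg h)]
    exact mul_le_mul_of_nonneg_right (E_bound h) (delta_nonneg h)
  · simp

lemma summable_abs_hh : Summable (fun n => |hh n|) :=
  Summable.of_nonneg_of_le (fun n => abs_nonneg _) abs_hh_le (summable_Δ'.mul_left c₁)

lemma summable_hh : Summable hh := summable_abs_hh.of_abs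

lemma tail_gg {N : ℕ} (hN : 2 ≤ N) :
    0 ≤ (∑' n, gg (n + N)) ∧ (∑' n, gg (n + N)) ≤ 4 / N := by
  have hs : Summable (fun n => gg (n + N)) := (summable_nat_add_iff N).mpr summable_gg
  refine ⟨tsum_nonneg fun n => gg_nonneg _, ?_⟩
  set K := N - 1 with hK
  have hKN : N = K + 1 := by omega
  have hK1 : (1:ℝ) ≤ (K:ℝ) := by exact_mod_cast (show 1 ≤ K by omega)
  apply hs.tsum_le_of_sum_range_le
  intro M
  set f : ℕ → ℝ := fun j => 2 / ((K:ℝ) + j) with hf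
  have step : ∀ j ∈ range M, gg (j + N) ≤ f j - f (j + 1) := by
    intro j _
    have h1 : gg (j + N) ≤ 2 / ((j + N : ℕ):ℝ)^2 := gg_le _
    have h2 : ((j + N : ℕ):ℝ) = (K:ℝ) + j + 1 := by
      rw [hKN]; push_cast; ring
    rw [h2] at h1
    have hpos : (0:ℝ) < (K:ℝ) + j := by
      have : (0:ℝ) ≤ (j:ℝ) := by positivity
      linarith
    have hpos1 : (0:ℝ) < (K:ℝ) + j + 1 := by linarith
    have hfd : f j - f (j + 1) = 2 / (((K:ℝ) + j) * ((K:ℝ) + j + 1)) := by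
      rw [hf]
      push_cast
      field_simp
      ring
    rw [hfd]
    refine h1.trans ?_
    apply div_le_div_of_nonneg_left (by norm_num) (by positivity)
    nlinarith
  calc ∑ j ∈ range M, gg (j + N) ≤ ∑ j ∈ range M, (f j - f (j + 1)) :=
        Finset.sum_le_sum step
    _ = f 0 - f M := Finset.sum_range_sub' f M
    _ ≤ f 0 := by
        have : 0 ≤ f M := by rw [hf]; positivity
        linarith
    _ = 2 / (K:ℝ) := by rw [hf]; norm_num
    _ ≤ 4 / (N:ℝ) := by
        rw [div_le_div_iff₀ (by linarith) (by rw [hKN]; push_cast; linarith)]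
        rw [hKN]; push_cast; linarith

lemma tail_hh {N : ℕ} (hN : 2 ≤ N) : |∑' n, hh (n + N)| ≤ c₁ * b N := by
  have hsabs : Summable (fun n => |hh (n + N)|) :=
    (summable_nat_add_iff (f := fun n => |hh n|) N).mpr summable_abs_hh
  have h1 : |∑' n, hh (n + N)| ≤ ∑' n, |hh (n + N)| := by
    have := norm_tsum_le_tsum_norm (f := fun n => hh (n + N))
      (by simpa [Real.norm_eq_abs] using hsabs)
    simpa [Real.norm_eq_abs] using this
  refine h1.trans ?_
  apply hsabs.tsum_le_of_sum_range_le
  intro M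
  have h2 : ∀ j ∈ range M, |hh (j + N)| ≤ c₁ * Δ (j + N) := by
    intro j _
    have := abs_hh_le (j + N)
    rwa [Δ', if_pos (by omega)] at this
  have h3 : ∑ j ∈ range M, Δ (j + N) = b N - b (N + M) := by
    have h4 := sum_delta (N := N) (M := N + M) (by omega)
    rw [Finset.sum_Ico_eq_sum_range] at h4
    simp only [Nat.add_sub_cancel_left] at h4
    rw [← h4]
    exact Finset.sum_congr rfl fun j _ => by rw [Nat.add_comm]
  calc ∑ j ∈ range M, |hh (j + N)| ≤ ∑ j ∈ range M, c₁ * Δ (j + N) :=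
        Finset.sum_le_sum h2
    _ = c₁ * (b N - b (N + M)) := by rw [← Finset.mul_sum, h3]
    _ ≤ c₁ * b N := by
        have hb : 0 ≤ b (N + M) := (b_pos (by omega)).le
        have := c₁_pos.le
        nlinarith

lemma sum_loglog {N : ℕ} (hN : 2 ≤ N) :
    ∑ n ∈ Ico 2 N, (Real.log (Real.log ((n:ℝ) + 1)) - Real.log (Real.log (n:ℝ)))
      = Real.log (Real.log N) - Real.log (Real.log 2) := by
  rw [Finset.sum_Ico_eq_sum_range]
  have hstep : ∀ j ∈ range (N - 2),
      (Real.log (Real.log (((2 + j : ℕ):ℝ) + 1)) - Real.log (Real.log ((2 + j : ℕ):ℝ)))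
        = (fun i => Real.log (Real.log ((2 + i : ℕ) : ℝ))) (j + 1)
          - (fun i => Real.log (Real.log ((2 + i : ℕ) : ℝ))) j := by
    intro j _
    show Real.log (Real.log (((2 + j : ℕ):ℝ) + 1)) - Real.log (Real.log ((2 + j : ℕ):ℝ))
      = Real.log (Real.log ((2 + (j + 1) : ℕ):ℝ)) - Real.log (Real.log ((2 + j : ℕ):ℝ))
    have : ((2 + (j + 1) : ℕ) : ℝ) = ((2 + j : ℕ):ℝ) + 1 := by push_cast; ring
    rw [this]
  rw [Finset.sum_congr rfl hstep,
    Finset.sum_range_sub (fun i => Real.log (Real.log ((2 + i : ℕ) : ℝ)))]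
  show Real.log (Real.log ((2 + (N - 2) : ℕ):ℝ)) - Real.log (Real.log ((2 + 0 : ℕ):ℝ)) = _
  have h1 : 2 + (N - 2) = N := by omega
  rw [h1]
  norm_num

lemma main_id {N : ℕ} (hN : 2 ≤ N) :
    ∑ n ∈ range (N + 1), a n * b n
      = 1 + E N * b N + (Real.log (Real.log N) - Real.log (Real.log 2))
        - (∑ n ∈ Ico 2 N, g n) + (∑ n ∈ Ico 2 N, E n * Δ n) := by
  rw [abel]
  have hlogN : Real.log N ≠ 0 := ne_of_gt (log_pos_of_two_le hN)
  have h1 : T N * b N = 1 + E N * b N := by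
    rw [E, b]
    field_simp
    ring
  have h2 : ∑ n ∈ range N, T n * Δ n = ∑ n ∈ Ico 2 N, T n * Δ n := by
    rw [Finset.range_eq_Ico, ← Finset.sum_Ico_consecutive _ (by omega : 0 ≤ 2) hN]
    have hT0 : T 0 = 0 := by simp [T, a]
    have hT1 : T 1 = 0 := by
      rw [T]
      simp [Finset.sum_range_succ, a]
    have hz : ∑ n ∈ Ico 0 2, T n * Δ n = 0 := by
      have : Ico 0 2 = ({0, 1} : Finset ℕ) := rfl
      rw [this, Finset.sum_insert (by decide), Finset.sum_singleton, hT0, hT1]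
      ring
    rw [hz, zero_add]
  rw [h1, h2]
  have h3 : ∀ n ∈ Ico 2 N, T n * Δ n =
      ((Real.log (Real.log ((n:ℝ) + 1)) - Real.log (Real.log (n:ℝ))) - g n) + E n * Δ n := by
    intro n hn
    have h2n : 2 ≤ n := (Finset.mem_Ico.mp hn).1
    have hnR : (2:ℝ) ≤ (n:ℝ) := by exact_mod_cast h2n
    have hlogn : Real.log n ≠ 0 := ne_of_gt (log_pos_of_two_le h2n)
    have hlogn1 : Real.log ((n:ℝ) + 1) ≠ 0 := by
      have := Real.log_pos (x := (n:ℝ) + 1) (by linarith)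
      linarith
    have hTn : T n = Real.log n + E n := by rw [E]; ring
    rw [hTn, g, Δ, b, b]
    push_cast
    field_simp
    ring
  rw [Finset.sum_congr rfl h3, Finset.sum_add_distrib, Finset.sum_sub_distrib, sum_loglog hN]
  ring

noncomputable def B : ℝ := 1 - Real.log (Real.log 2) - (∑' n, gg n) + (∑' n, hh n)

theorem int_bound {N : ℕ} (hN : 2 ≤ N) :
    |(∑ n ∈ range (N + 1), a n * b n) - Real.log (Real.log N) - B|
      ≤ (2 * c₁ + 4) / Real.log N := by
  have hgg := summable_gg.sum_add_tsum_nat_add N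
  have hhh := summable_hh.sum_add_tsum_nat_add N
  have hgsum : ∑ n ∈ range N, gg n = ∑ n ∈ Ico 2 N, g n := sum_range_ite g N
  have hhsum : ∑ n ∈ range N, hh n = ∑ n ∈ Ico 2 N, E n * Δ n := by
    have := sum_range_ite (fun n => E n * Δ n) N
    rw [← this]
    rfl
  rw [main_id hN]
  have hE := E_bound hN
  have hlogN := log_pos_of_two_le hN
  obtain ⟨ht1, ht2⟩ := tail_gg hN
  have ht3 := tail_hh hN
  have key : 1 + E N * b N + (Real.log (Real.log N) - Real.log (Real.log 2))
      - (∑ n ∈ Ico 2 N, g n) + (∑ n ∈ Ico 2 N, E n * Δ n) - Real.log (Real.log N) - B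
      = E N * b N + (∑' n, gg (n + N)) - (∑' n, hh (n + N)) := by
    rw [B, ← hgsum, ← hhsum]
    linarith [hgg, hhh]
  rw [key]
  have hbN : b N = 1 / Real.log N := rfl
  have b1 : |E N * b N| ≤ c₁ / Real.log N := by
    rw [abs_mul, hbN, abs_of_nonneg (by positivity : (0:ℝ) ≤ 1 / Real.log N)]
    calc |E N| * (1 / Real.log N) ≤ c₁ * (1 / Real.log N) :=
          mul_le_mul_of_nonneg_right hE (by positivity)
      _ = c₁ / Real.log N := by ring
  have hNR : (2:ℝ) ≤ (N:ℝ) := by exact_mod_cast hN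
  have hlogNle : Real.log N ≤ (N:ℝ) := by
    have := Real.log_le_sub_one_of_pos (show (0:ℝ) < N by linarith)
    linarith
  have b2 : (∑' n, gg (n + N)) ≤ 4 / Real.log N := by
    refine ht2.trans ?_
    apply div_le_div_of_nonneg_left (by norm_num) hlogN hlogNle
  have b3 : |∑' n, hh (n + N)| ≤ c₁ / Real.log N := by
    refine ht3.trans_eq ?_
    rw [hbN]; ring
  have habs : |E N * b N + (∑' n, gg (n + N)) - (∑' n, hh (n + N))|
      ≤ |E N * b N| + (∑' n, gg (n + N)) + |∑' n, hh (n + N)| := by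
    have h := abs_add_le (E N * b N + (∑' n, gg (n + N))) (-(∑' n, hh (n + N)))
    have h2 := abs_add_le (E N * b N) (∑' n, gg (n + N))
    rw [abs_neg] at h
    have h3 : |(∑' n, gg (n + N))| = ∑' n, gg (n + N) := abs_of_nonneg ht1
    calc |E N * b N + (∑' n, gg (n + N)) - (∑' n, hh (n + N))|
        = |(E N * b N + (∑' n, gg (n + N))) + (-(∑' n, hh (n + N)))| := by
          rw [sub_eq_add_neg]
      _ ≤ |E N * b N + (∑' n, gg (n + N))| + |∑' n, hh (n + N)| := h
      _ ≤ |E N * b N| + |(∑' n, gg (n + N))| + |∑' n, hh (n + N)| := by linarith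
      _ = _ := by rw [h3]
  have : c₁ / Real.log N + 4 / Real.log N + c₁ / Real.log N = (2 * c₁ + 4) / Real.log N := by
    field_simp
    ring
  linarith

end Mertens

/-- **Theorem 7(i) (Mertens).** There are a constant `B₁` (the Mertens constant) and `C > 0`
such that `|∑_{p ≤ x} 1/p − log log x − B₁| ≤ C / log x` for all `x ≥ 2`. -/
theorem mertens_second_theorem :
    ∃ B₁ : ℝ, ∃ C : ℝ, 0 < C ∧ ∀ x : ℝ, 2 ≤ x →
      |(∑ p ∈ (Finset.range (⌊x⌋₊ + 1)).filter Nat.Prime, (1 : ℝ) / p) -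
          Real.log (Real.log x) - B₁| ≤ C / Real.log x := by
  classical
  refine ⟨Mertens.B, 4 * Mertens.c₁ + 11, by have := Mertens.c₁_pos; linarith, fun x hx => ?_⟩
  set N := ⌊x⌋₊ with hNdef
  have hN2 : 2 ≤ N := Nat.le_floor (by exact_mod_cast hx)
  have hNR : (2:ℝ) ≤ (N:ℝ) := by exact_mod_cast hN2
  have hNx : (N:ℝ) ≤ x := Nat.floor_le (by linarith)
  have hxN1 : x < (N:ℝ) + 1 := Nat.lt_floor_add_one x
  have hlogN : 0 < Real.log N := Mertens.log_pos_of_two_le hN2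
  have hlogx : 0 < Real.log x := Real.log_pos (by linarith)
  have hlogNx : Real.log N ≤ Real.log x := Real.log_le_log (by linarith) hNx
  have hlogx2 : Real.log x ≤ 2 * Real.log N := by
    have h1 : x ≤ (N:ℝ)^2 := by nlinarith
    calc Real.log x ≤ Real.log ((N:ℝ)^2) := Real.log_le_log (by linarith) h1
      _ = 2 * Real.log N := by
          rw [show ((N:ℝ)^2) = (N:ℝ)^(2:ℕ) by norm_num, Real.log_pow]; norm_num
  have hll0 : 0 ≤ Real.log (Real.log x) - Real.log (Real.log N) := by
    have := Real.log_le_log hlogN hlogNx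
    linarith
  have hll3 : Real.log (Real.log x) - Real.log (Real.log N) ≤ 3 / Real.log x := by
    have h1 : Real.log (Real.log x) - Real.log (Real.log N)
        ≤ (Real.log x - Real.log N) / Real.log N := by
      rw [← Real.log_div (ne_of_gt hlogx) (ne_of_gt hlogN)]
      have h1a := Real.log_le_sub_one_of_pos
        (show 0 < Real.log x / Real.log N by positivity)
      have he : Real.log x / Real.log N - 1 = (Real.log x - Real.log N) / Real.log N := by
        field_simp
      linarith [he ▸ h1a]
    have h2 : Real.log x - Real.log N ≤ 1 / N := by
      have h3 : Real.log x ≤ Real.log ((N:ℝ) + 1) := Real.log_le_log (by linarith) (by linarith)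
      have h4 := Mertens.log_succ_sub_le (n := N) (by omega)
      push_cast at h4
      linarith
    have hlog2N : Real.log 2 ≤ Real.log N := Real.log_le_log (by norm_num) hNR
    have hl2 : (0.6931471803 : ℝ) < Real.log 2 := Real.log_two_gt_d9
    have h5 : (Real.log x - Real.log N) / Real.log N ≤ (1 / (N:ℝ)) / Real.log 2 := by
      apply div_le_div₀ (by positivity) h2 (by linarith) hlog2N
    have h6 : (1 / (N:ℝ)) / Real.log 2 ≤ 3 / Real.log x := by
      rw [div_le_div_iff₀ (by positivity) hlogx]
      have hxle : Real.log x ≤ x := by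
        have := Real.log_le_sub_one_of_pos (show (0:ℝ) < x by linarith)
        linarith
      have hx2N : x ≤ 2 * N := by linarith
      have h7 : (1 / (N:ℝ)) * Real.log x ≤ 2 := by
        calc (1 / (N:ℝ)) * Real.log x ≤ (1 / (N:ℝ)) * (2 * N) := by
              apply mul_le_mul_of_nonneg_left (by linarith) (by positivity)
          _ = 2 := by field_simp
      nlinarith [hl2]
    linarith
  have hint := Mertens.int_bound hN2
  have hSeq := Mertens.S_eq N
  rw [hSeq]
  have hsplit : (∑ n ∈ Finset.range (N + 1), Mertens.a n * Mertens.b n)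
        - Real.log (Real.log x) - Mertens.B
      = ((∑ n ∈ Finset.range (N + 1), Mertens.a n * Mertens.b n)
          - Real.log (Real.log N) - Mertens.B)
        - (Real.log (Real.log x) - Real.log (Real.log N)) := by ring
  rw [hsplit]
  have htri : |((∑ n ∈ Finset.range (N + 1), Mertens.a n * Mertens.b n)
          - Real.log (Real.log N) - Mertens.B)
        - (Real.log (Real.log x) - Real.log (Real.log N))|
      ≤ |(∑ n ∈ Finset.range (N + 1), Mertens.a n * Mertens.b n)
          - Real.log (Real.log N) - Mertens.B|
        + |Real.log (Real.log x) - Real.log (Real.log N)| := by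
    rw [sub_eq_add_neg]
    refine (abs_add_le _ _).trans ?_
    rw [abs_neg]
  have hdd : (2 * Mertens.c₁ + 4) / Real.log N ≤ (4 * Mertens.c₁ + 8) / Real.log x := by
    rw [div_le_div_iff₀ hlogN hlogx]
    have := Mertens.c₁_pos
    nlinarith
  have habs2 : |Real.log (Real.log x) - Real.log (Real.log N)| ≤ 3 / Real.log x := by
    rw [abs_of_nonneg hll0]; exact hll3
  have hfin : (4 * Mertens.c₁ + 8) / Real.log x + 3 / Real.log x
      = (4 * Mertens.c₁ + 11) / Real.log x := by
    field_simp
    ring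
  linarith [htri, hint.trans hdd, habs2]
end
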